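/- Let Z₁, Z₂ be standard Borel spaces, let (g¹_s)_{s∈ℝ} and (g²_s)_{s∈ℝ} be measurable flows on Z₁ and Z₂ respectively with each g¹_s a Borel bijection, and let π : Z₁ → Z₂ be a Borel measurable map such that (1) for every z₂ ∈ Z₂ the preimage π⁻¹({z₂}) is finite, and (2) π ∘ g¹_s = g²_s ∘ π for all s ∈ ℝ. Let P₂ be a Borel probability measure on Z₂ that is invariant and ergodic under the flow (g²_s). Then there exists a natural number c such that for P₂-almost every z₂ ∈ Z₂ the cardinality of the preimage π⁻¹({z₂}) equals c. -/

import Mathlib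

open MeasureTheory Set Function PiNat

namespace NovikovAux

variable {α : Type*}

/-- A countable family of sets admits Borel envelopes with empty intersection. -/
def CtblSep [MeasurableSpace α] (s : ℕ → Set α) : Prop :=
  ∃ B : ℕ → Set α, (∀ n, s n ⊆ B n) ∧ (∀ n, MeasurableSet (B n)) ∧ (⋂ n, B n) = ∅

lemma ctblSep_of_iUnion [MeasurableSpace α] {s : ℕ → Set α} {m : ℕ} {u : ℕ → Set α}
    (hu : s m = ⋃ i, u i) (H : ∀ i, CtblSep (Function.update s m (u i))) : CtblSep s := by
  choose B hB1 hB2 hB3 using H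
  refine ⟨fun n => if n = m then ⋃ i, B i m else ⋂ i, B i n, ?_, ?_, ?_⟩
  · intro n
    by_cases hn : n = m
    · subst hn
      simp only [if_pos rfl]
      rw [hu]
      refine iUnion_subset fun i => subset_iUnion_of_subset i ?_
      have := hB1 i n
      rwa [Function.update_self] at this
    · simp only [if_neg hn]
      refine subset_iInter fun i => ?_
      have := hB1 i n
      rwa [Function.update_of_ne hn] at this
  · intro n
    by_cases hn : n = m
    · simp only [if_pos hn]
      exact MeasurableSet.iUnion fun i => hB2 i m
    · simp only [if_neg hn]
      exact MeasurableSet.iInter fun i => hB2 i n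
  · rw [eq_empty_iff_forall_notMem]
    intro z hz
    have hzm := mem_iInter.1 hz m
    rw [if_pos rfl] at hzm
    obtain ⟨i₀, hi₀⟩ : ∃ i, z ∈ B i m := mem_iUnion.1 hzm
    have : z ∈ ⋂ n, B i₀ n := by
      refine mem_iInter.2 fun n => ?_
      by_cases hn : n = m
      · subst hn; exact hi₀
      · have := mem_iInter.1 hz n
        rw [if_neg hn] at this
        exact mem_iInter.1 this i₀
    rw [hB3 i₀] at this
    exact this

variable [TopologicalSpace α] [T2Space α] [MeasurableSpace α] [OpensMeasurableSpace α]

theorem ctblSep_ranges (f : ℕ → (ℕ → ℕ) → α) (hf : ∀ n, Continuous (f n))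
    (hdisj : (⋂ n, range (f n)) = ∅) : CtblSep (fun n => range (f n)) := by
  by_contra hc
  -- one-step extension
  have I : ∀ (x : ℕ → ℕ → ℕ) (q : ℕ → ℕ) (m : ℕ),
      ¬ CtblSep (fun n => f n '' cylinder (x n) (q n)) →
      ∃ x' : ℕ → ℕ → ℕ, (∀ n, n ≠ m → x' n = x n) ∧ x' m ∈ cylinder (x m) (q m) ∧
        ¬ CtblSep (fun n => f n '' cylinder (x' n) (Function.update q m (q m + 1) n)) := by
    intro x q m
    contrapose!
    intro H
    have hu : (fun n => f n '' cylinder (x n) (q n)) m = ⋃ i,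
        f m '' cylinder (Function.update (x m) (q m) i) (q m + 1) := by
      simp only
      rw [← iUnion_cylinder_update (x m) (q m), image_iUnion]
    refine ctblSep_of_iUnion hu fun i => ?_
    set x' : ℕ → ℕ → ℕ := Function.update x m (Function.update (x m) (q m) i) with hx'
    have h1 : ∀ n, n ≠ m → x' n = x n := fun n hn => Function.update_of_ne hn _ _
    have h2 : x' m ∈ cylinder (x m) (q m) := by
      rw [hx', Function.update_self]
      exact update_mem_cylinder _ _ _
    have := H x' h1 h2
    convert this using 1
    funext n
    by_cases hn : n = m
    · subst hn
      rw [Function.update_self, Function.update_self, hx', Function.update_self]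
    · rw [Function.update_of_ne hn, Function.update_of_ne hn, h1 n hn]
  -- the set of states
  let A := {p : (ℕ → ℕ → ℕ) × (ℕ → ℕ) //
    ¬ CtblSep (fun n => f n '' cylinder (p.1 n) (p.2 n))}
  have hstep : ∀ (p : A) (m : ℕ), ∃ q : A,
      (∀ n, n ≠ m → q.1.1 n = p.1.1 n) ∧ q.1.1 m ∈ cylinder (p.1.1 m) (p.1.2 m) ∧
      q.1.2 = Function.update p.1.2 m (p.1.2 m + 1) := by
    rintro ⟨⟨x, q⟩, hp⟩ m
    rcases I x q m hp with ⟨x', h1, h2, h3⟩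
    exact ⟨⟨⟨x', Function.update q m (q m + 1)⟩, h3⟩, h1, h2, rfl⟩
  choose step hstep1 hstep2 hstep3 using hstep
  have hp0 : ¬ CtblSep (fun n => f n '' cylinder ((fun _ _ => 0 : ℕ → ℕ → ℕ) n)
      ((fun _ => 0 : ℕ → ℕ) n)) := by
    simpa only [cylinder_zero, image_univ] using hc
  let p0 : A := ⟨⟨fun _ _ => 0, fun _ => 0⟩, hp0⟩
  let nt : ℕ → ℕ := fun t => (Nat.unpair t).1
  let P : ℕ → A := fun t => Nat.rec p0 (fun t ih => step ih (nt t)) t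
  have Psucc : ∀ t, P (t + 1) = step (P t) (nt t) := fun t => rfl
  set len : ℕ → ℕ → ℕ := fun t n => (P t).1.2 n with hlen
  set pt : ℕ → ℕ → ℕ → ℕ := fun t n => (P t).1.1 n with hpt
  have len0 : ∀ n, len 0 n = 0 := fun n => rfl
  have lenS : ∀ t n, len (t + 1) n = if n = nt t then len t n + 1 else len t n := by
    intro t n
    have := hstep3 (P t) (nt t)
    rw [hlen]
    simp only [Psucc t, this]
    by_cases hn : n = nt t
    · subst hn; rw [Function.update_self, if_pos rfl]
    · rw [Function.update_of_ne hn, if_neg hn]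
  have lenmono : ∀ t t' n, t ≤ t' → len t n ≤ len t' n := by
    intro t t' n h
    induction t' with
    | zero =>
      have : t = 0 := Nat.le_zero.1 h
      subst this; exact le_rfl
    | succ k ih =>
      rcases Nat.lt_or_ge t (k+1) with h'|h'
      · have hk : t ≤ k := by omega
        refine le_trans (ih hk) ?_
        rw [lenS]
        split <;> omega
      · have : t = k + 1 := le_antisymm h h'
        subst this; exact le_rfl
  have ptstab : ∀ t n i, i < len t n → pt (t + 1) n i = pt t n i := by
    intro t n i hi
    by_cases hn : n = nt t
    · subst hn
      have h2 := hstep2 (P t) (nt t)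
      rw [mem_cylinder_iff] at h2
      have := h2 i hi
      rw [hpt]
      simpa only [Psucc t] using this
    · have h1 := hstep1 (P t) (nt t) n hn
      rw [hpt]
      simp only [Psucc t, h1]
  have ptstab' : ∀ t t' n i, t ≤ t' → i < len t n → pt t' n i = pt t n i := by
    intro t t' n i h hi
    induction t' with
    | zero =>
      have : t = 0 := Nat.le_zero.1 h
      subst this; rfl
    | succ k ih =>
      rcases Nat.lt_or_ge t (k+1) with h'|h'
      · have hk : t ≤ k := by omega
        rw [← ih hk]
        exact ptstab k n i (lt_of_lt_of_le hi (lenmono t k n hk))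
      · have : t = k + 1 := le_antisymm h h'
        subst this; rfl
  -- lengths go to infinity
  have lenunb : ∀ n N, ∃ t, N ≤ len t n := by
    intro n N
    induction N with
    | zero => exact ⟨0, Nat.zero_le _⟩
    | succ N ih =>
      obtain ⟨t, ht⟩ := ih
      refine ⟨Nat.pair n t + 1, ?_⟩
      have h1 : nt (Nat.pair n t) = n := by simp [nt, Nat.unpair_pair]
      rw [lenS, h1, if_pos rfl]
      have := lenmono t (Nat.pair n t) n (Nat.right_le_pair n t)
      omega
  -- the limit points
  choose tau htau using fun n i => lenunb n (i + 1)
  set x : ℕ → ℕ → ℕ := fun n i => pt (tau n i) n i with hx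
  have consist : ∀ t n i, i < len t n → pt t n i = x n i := by
    intro t n i hi
    have hti : i < len (tau n i) n := htau n i
    rcases le_total t (tau n i) with h|h
    · exact (ptstab' t (tau n i) n i h hi).symm
    · exact ptstab' (tau n i) t n i h hti
  have M : ∀ t, ¬ CtblSep (fun n => f n '' cylinder (x n) (len t n)) := by
    intro t
    have heq : (fun n => f n '' cylinder (x n) (len t n))
        = fun n => f n '' cylinder (pt t n) (len t n) := by
      funext n
      have hmem : pt t n ∈ cylinder (x n) (len t n) := by
        rw [mem_cylinder_iff]
        intro i hi
        exact consist t n i hi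
      rw [mem_cylinder_iff_eq] at hmem
      rw [← hmem]
    rw [heq]
    exact (P t).2
  -- at every stage, any two of the current analytic pieces intersect
  have Pair : ∀ t n m, n ≠ m →
      ∃ z, z ∈ f n '' cylinder (x n) (len t n) ∧ z ∈ f m '' cylinder (x m) (len t m) := by
    intro t n m hnm
    by_contra hz
    push_neg at hz
    have hdis : Disjoint (f n '' cylinder (x n) (len t n)) (f m '' cylinder (x m) (len t m)) := by
      rw [Set.disjoint_left]
      intro z hz1 hz2
      exact hz z hz1 hz2
    have han : AnalyticSet (f n '' cylinder (x n) (len t n)) :=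
      IsOpen.analyticSet_image (PiNat.isOpen_cylinder (fun _ => ℕ) (x n) (len t n)) (hf n)
    have ham : AnalyticSet (f m '' cylinder (x m) (len t m)) :=
      IsOpen.analyticSet_image (PiNat.isOpen_cylinder (fun _ => ℕ) (x m) (len t m)) (hf m)
    obtain ⟨u, hsu, hdu, hmu⟩ := han.measurablySeparable ham hdis
    have hcm : f m '' cylinder (x m) (len t m) ⊆ uᶜ :=
      fun z hz' hzu => Set.disjoint_left.1 hdu hz' hzu
    refine M t ⟨fun k => if k = n then u else if k = m then uᶜ else univ, ?_, ?_, ?_⟩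
    · intro k
      rcases eq_or_ne k n with rfl|hk
      · simpa using hsu
      rcases eq_or_ne k m with rfl|hk'
      · simpa [hk] using hcm
      · simp [hk, hk']
    · intro k
      rcases eq_or_ne k n with rfl|hk
      · simpa using hmu
      rcases eq_or_ne k m with rfl|hk'
      · simpa [hk] using hmu.compl
      · simp [hk, hk']
    · rw [eq_empty_iff_forall_notMem]
      intro z hzz
      have h1 := mem_iInter.1 hzz n
      have h2 := mem_iInter.1 hzz m
      have e1 : (if n = n then u else if n = m then uᶜ else univ) = u := if_pos rfl
      have e2 : (if m = n then u else if m = m then uᶜ else univ) = uᶜ := by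
        rw [if_neg (Ne.symm hnm), if_pos rfl]
      rw [e1] at h1
      rw [e2] at h2
      exact h2 h1
  -- all the limit values agree
  have Eq : ∀ n m, f n (x n) = f m (x m) := by
    intro n m
    rcases eq_or_ne n m with rfl|hnm
    · rfl
    by_contra hne
    obtain ⟨u, v, u_open, v_open, xu, yv, huv⟩ :
        ∃ u v : Set α, IsOpen u ∧ IsOpen v ∧ f n (x n) ∈ u ∧ f m (x m) ∈ v ∧ Disjoint u v :=
      t2_separation hne
    letI : MetricSpace (ℕ → ℕ) := metricSpaceNatNat
    obtain ⟨εn, εnpos, hεn⟩ : ∃ εn : ℝ, εn > 0 ∧ Metric.ball (x n) εn ⊆ f n ⁻¹' u :=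
      Metric.mem_nhds_iff.1 ((hf n).continuousAt.preimage_mem_nhds (u_open.mem_nhds xu))
    obtain ⟨εm, εmpos, hεm⟩ : ∃ εm : ℝ, εm > 0 ∧ Metric.ball (x m) εm ⊆ f m ⁻¹' v :=
      Metric.mem_nhds_iff.1 ((hf m).continuousAt.preimage_mem_nhds (v_open.mem_nhds yv))
    obtain ⟨k, hk⟩ : ∃ k : ℕ, (1 / 2 : ℝ) ^ k < min εn εm :=
      exists_pow_lt_of_lt_one (lt_min εnpos εmpos) (by norm_num)
    obtain ⟨t1, ht1⟩ := lenunb n k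
    obtain ⟨t2, ht2⟩ := lenunb m k
    set t := max t1 t2 with ht
    have hln : k ≤ len t n := le_trans ht1 (lenmono t1 t n (le_max_left _ _))
    have hlm : k ≤ len t m := le_trans ht2 (lenmono t2 t m (le_max_right _ _))
    obtain ⟨z, ⟨a, ha, haz⟩, ⟨b, hb, hbz⟩⟩ := Pair t n m hnm
    have hau : z ∈ u := by
      have hcyl : a ∈ cylinder (x n) k := cylinder_anti _ hln ha
      rw [mem_cylinder_iff_dist_le] at hcyl
      have hmem : a ∈ Metric.ball (x n) εn := by
        rw [Metric.mem_ball]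
        calc dist a (x n) ≤ (1/2)^k := hcyl
          _ < min εn εm := hk
          _ ≤ εn := min_le_left _ _
      rw [← haz]
      exact hεn hmem
    have hbv : z ∈ v := by
      have hcyl : b ∈ cylinder (x m) k := cylinder_anti _ hlm hb
      rw [mem_cylinder_iff_dist_le] at hcyl
      have hmem : b ∈ Metric.ball (x m) εm := by
        rw [Metric.mem_ball]
        calc dist b (x m) ≤ (1/2)^k := hcyl
          _ < min εn εm := hk
          _ ≤ εm := min_le_right _ _
      rw [← hbz]
      exact hεm hmem
    exact Set.disjoint_left.1 huv hau hbv
  -- contradiction with empty intersection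
  have : f 0 (x 0) ∈ ⋂ n, range (f n) := by
    refine mem_iInter.2 fun n => ?_
    rw [Eq 0 n]
    exact mem_range_self _
  rw [hdisj] at this
  exact this

theorem novikov (s : ℕ → Set α) (hs : ∀ n, AnalyticSet (s n)) (h : (⋂ n, s n) = ∅) :
    CtblSep s := by
  by_cases he : ∃ n₀, s n₀ = ∅
  · obtain ⟨n₀, hn₀⟩ := he
    refine ⟨fun n => if n = n₀ then ∅ else univ, ?_, ?_, ?_⟩
    · intro n
      rcases eq_or_ne n n₀ with rfl|hn
      · simp [hn₀]
      · simp [hn]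
    · intro n
      by_cases hn : n = n₀ <;> simp [hn]
    · rw [eq_empty_iff_forall_notMem]
      intro z hz
      have := mem_iInter.1 hz n₀
      simpa using this
  · push_neg at he
    have hex : ∀ n, ∃ f : (ℕ → ℕ) → α, Continuous f ∧ range f = s n := by
      intro n
      have h' := hs n
      rw [AnalyticSet] at h'
      rcases h' with h'|h'
      · exact absurd h' (he n).ne_empty
      · exact h'
    choose f hfc hfr using hex
    have hr : (fun n => range (f n)) = s := funext hfr
    have := ctblSep_ranges f hfc (by rw [hr]; exact h)
    rwa [hr] at this

/-- Point-finite Borel envelopes for a family of analytic sets whose "limsup" is empty. -/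
lemma envelopes_limsup (s : ℕ → Set α) (hs : ∀ n, AnalyticSet (s n))
    (h : (⋂ m, ⋃ j, s (j + m)) = ∅) :
    ∃ B : ℕ → Set α, (∀ n, s n ⊆ B n) ∧ (∀ n, MeasurableSet (B n)) ∧
      (⋂ m, ⋃ j, B (j + m)) = ∅ := by
  set D : ℕ → Set α := fun m => ⋃ j, s (j + m) with hD
  have hDa : ∀ m, AnalyticSet (D m) := fun m => AnalyticSet.iUnion fun j => hs (j + m)
  obtain ⟨E, hE1, hE2, hE3⟩ := novikov D hDa h
  have hDanti : ∀ i j, i ≤ j → D j ⊆ D i := by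
    intro i j hij
    refine iUnion_subset fun k => ?_
    intro z hz
    have : k + j = (k + (j - i)) + i := by omega
    exact mem_iUnion.2 ⟨k + (j - i), by rw [← this]; exact hz⟩
  refine ⟨fun j => ⋂ i, ⋂ (_ : i ≤ j), E i, ?_, ?_, ?_⟩
  · intro j
    refine subset_iInter fun i => subset_iInter fun hij => ?_
    intro z hz
    refine hE1 i (hDanti i j hij ?_)
    have : j = 0 + j := by omega
    exact mem_iUnion.2 ⟨0, by rw [← this]; exact hz⟩
  · intro j
    exact MeasurableSet.iInter fun i => MeasurableSet.iInter fun _ => hE2 i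
  · rw [eq_empty_iff_forall_notMem]
    intro z hz
    have hmem : z ∈ ⋂ i, E i := by
      refine mem_iInter.2 fun i => ?_
      have h1 := mem_iInter.1 hz i
      rcases mem_iUnion.1 h1 with ⟨j, hj⟩
      exact mem_iInter.1 (mem_iInter.1 hj i) (by omega)
    rw [hE3] at hmem
    exact hmem

/-- A Borel set between an analytic set and its closure. -/
lemma analytic_sandwich [PolishSpace α] [BorelSpace α] {s : Set α} (hs : AnalyticSet s) :
    ∃ B, s ⊆ B ∧ MeasurableSet B ∧ B ⊆ closure s := by
  have hop : AnalyticSet ((closure s)ᶜ) := isClosed_closure.measurableSet.compl.analyticSet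
  have hdis : Disjoint s (closure s)ᶜ := by
    rw [Set.disjoint_compl_right_iff_subset]
    exact subset_closure
  obtain ⟨u, hsu, hdu, hmu⟩ := hs.measurablySeparable hop hdis
  exact ⟨u, hsu, hmu, disjoint_compl_left_iff_subset.1 hdu⟩

end NovikovAux

namespace KonigAux

open List

lemma take_prefix_of_prefix {c t : List ℕ} (h : c <+: t) {N : ℕ} (hN : c.length ≤ N) :
    c <+: t.take N := by
  obtain ⟨r, rfl⟩ := h
  rw [List.take_append, List.take_of_length_le hN]
  exact ⟨_, rfl⟩

/-- König's lemma for trees of lists with finite nonempty levels. -/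
lemma exists_branch (T : Set (List ℕ))
    (hdc : ∀ l ∈ T, ∀ m, l.take m ∈ T)
    (hfin : ∀ n : ℕ, {l | l ∈ T ∧ l.length = n}.Finite)
    (hne : ∀ n : ℕ, ∃ l ∈ T, l.length = n) :
    ∃ L : ℕ → List ℕ, (∀ n, L n ∈ T) ∧ (∀ n, (L n).length = n) ∧
      (∀ n, L n <+: L (n + 1)) := by
  classical
  set good : List ℕ → Prop :=
    fun l => ∀ m : ℕ, ∃ t ∈ T, l <+: t ∧ t.length = l.length + m with hgood
  -- goodness is inherited by shorter extension lengths automatically via take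
  have hgood_mem : ∀ l, good l → l ∈ T := by
    intro l hl
    obtain ⟨t, htT, hpre, hlen⟩ := hl 0
    have : l = t := hpre.eq_of_length (by omega)
    rwa [this]
  have hgood_nil : good [] := by
    intro m
    obtain ⟨t, htT, hlen⟩ := hne m
    exact ⟨t, htT, List.nil_prefix, by simpa using hlen⟩
  have hgood_ext : ∀ l, good l → ∃ k : ℕ, good (l ++ [k]) := by
    intro l hl
    by_contra hcon
    push_neg at hcon
    have hcon' : ∀ k : ℕ, ∃ m : ℕ, ∀ t ∈ T, ¬((l ++ [k]) <+: t ∧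
        t.length = (l ++ [k]).length + m) := by
      intro k
      have h1 : ¬ ∀ m : ℕ, ∃ t ∈ T, (l ++ [k]) <+: t ∧
          t.length = (l ++ [k]).length + m := hcon k
      push_neg at h1
      obtain ⟨m, hm⟩ := h1
      exact ⟨m, fun t ht hc => hm t ht hc.1 hc.2⟩
    choose mf hmf using hcon'
    -- the set of children of l in T
    have hKfin : {k : ℕ | l ++ [k] ∈ T}.Finite := by
      have himg : (fun k : ℕ => l ++ [k]) '' {k : ℕ | l ++ [k] ∈ T} ⊆
          {l' | l' ∈ T ∧ l'.length = l.length + 1} := by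
        rintro _ ⟨k, hk, rfl⟩
        exact ⟨hk, by simp⟩
      have hinj : Function.Injective (fun k : ℕ => l ++ [k]) := by
        intro a b hab
        simpa using hab
      exact Set.Finite.of_finite_image (((hfin (l.length + 1)).subset himg)) hinj.injOn
    set M : ℕ := hKfin.toFinset.sup mf with hM
    obtain ⟨t, htT, hpre, hlen⟩ := hl (M + 1)
    set c : List ℕ := t.take (l.length + 1) with hc
    have hcT : c ∈ T := hdc t htT _
    have hclen : c.length = l.length + 1 := by
      rw [hc, List.length_take]
      omega
    have hlc : l <+: c := take_prefix_of_prefix hpre (by omega)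
    obtain ⟨r, hr⟩ := hlc
    have hrlen : r.length = 1 := by
      have h2 := hclen
      rw [← hr] at h2
      simp only [List.length_append] at h2
      omega
    obtain ⟨a, rfl⟩ := List.length_eq_one_iff.1 hrlen
    have haK : a ∈ hKfin.toFinset := by
      rw [Set.Finite.mem_toFinset]
      show l ++ [a] ∈ T
      rw [hr]; exact hcT
    have hma : mf a ≤ M := Finset.le_sup haK
    have hlen2 : (l ++ [a]).length = l.length + 1 := by simp
    refine hmf a (t.take ((l ++ [a]).length + mf a)) (hdc t htT _) ⟨?_, ?_⟩
    · refine take_prefix_of_prefix ?_ (Nat.le_add_right _ _)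
      rw [hr, hc]
      exact List.take_prefix _ _
    · rw [List.length_take]
      omega
  -- build the branch by recursion
  have hstep : ∀ p : {l : List ℕ // good l}, ∃ q : {l : List ℕ // good l},
      p.1 <+: q.1 ∧ q.1.length = p.1.length + 1 := by
    rintro ⟨l, hl⟩
    obtain ⟨k, hk⟩ := hgood_ext l hl
    exact ⟨⟨l ++ [k], hk⟩, ⟨[k], rfl⟩, by simp⟩
  choose next hnext1 hnext2 using hstep
  let L' : ℕ → {l : List ℕ // good l} :=
    fun n => Nat.rec ⟨[], hgood_nil⟩ (fun _ ih => next ih) n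
  have hL'succ : ∀ n, L' (n + 1) = next (L' n) := fun n => rfl
  have hL'len : ∀ n, (L' n).1.length = n := by
    intro n
    induction n with
    | zero => rfl
    | succ k ih =>
      show ((next (L' k) : {l : List ℕ // good l}) : List ℕ).length = k + 1
      rw [hnext2, ih]
  exact ⟨fun n => (L' n).1, fun n => hgood_mem _ (L' n).2, hL'len,
    fun n => hnext1 (L' n)⟩

end KonigAux

namespace FinFibAux

open NovikovAux KonigAux Metric MeasureTheory Set Function

/-- The range of a continuous finite-to-one map from a Polish space to `ℝ` is Borel. -/
theorem measurableSet_range_of_continuous_finite_fibers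
    {X : Type*} [TopologicalSpace X] [PolishSpace X]
    {f : X → ℝ} (hf : Continuous f) (hfib : ∀ y : ℝ, (f ⁻¹' {y}).Finite) :
    MeasurableSet (range f) := by
  classical
  rcases isEmpty_or_nonempty X with hX|hX
  · rw [range_eq_empty]
    exact MeasurableSet.empty
  letI := TopologicalSpace.upgradeIsCompletelyMetrizable X
  letI : MeasurableSpace X := borel X
  haveI : BorelSpace X := ⟨rfl⟩
  obtain ⟨u, hu⟩ : ∃ u : ℕ → X, DenseRange u := TopologicalSpace.exists_dense_seq X
  -- the pieces of the level-`n` partition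
  set Q : ℕ → ℕ → Set X := fun n i =>
    ball (u i) ((1/2 : ℝ)^(n+1)) \ ⋃ j ∈ Finset.range i, ball (u j) ((1/2 : ℝ)^(n+1)) with hQdef
  have Qmeas : ∀ n i, MeasurableSet (Q n i) := by
    intro n i
    exact (isOpen_ball.measurableSet).diff
      (Finset.measurableSet_biUnion _ fun j _ => isOpen_ball.measurableSet)
  have Qcover : ∀ n x, ∃ i, x ∈ Q n i := by
    intro n x
    have hex : ∃ i, x ∈ ball (u i) ((1/2 : ℝ)^(n+1)) := by
      obtain ⟨i, hi⟩ := hu.exists_dist_lt x (by positivity : (0:ℝ) < (1/2 : ℝ)^(n+1))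
      exact ⟨i, by rwa [mem_ball]⟩
    refine ⟨Nat.find hex, Nat.find_spec hex, ?_⟩
    intro hmem
    simp only [Finset.mem_range, mem_iUnion] at hmem
    obtain ⟨j, hj, hjx⟩ := hmem
    exact Nat.find_min hex hj hjx
  have Qdisj : ∀ n i j, i ≠ j → Disjoint (Q n i) (Q n j) := by
    intro n i j hij
    rcases lt_or_gt_of_ne hij with h|h
    · refine Set.disjoint_left.2 fun x hxi hxj => ?_
      exact hxj.2 (mem_iUnion.2 ⟨i, mem_iUnion.2 ⟨Finset.mem_range.2 h, hxi.1⟩⟩)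
    · refine Set.disjoint_left.2 fun x hxi hxj => ?_
      exact hxi.2 (mem_iUnion.2 ⟨j, mem_iUnion.2 ⟨Finset.mem_range.2 h, hxj.1⟩⟩)
  have Qdiam : ∀ n i, ∀ x ∈ Q n i, ∀ y ∈ Q n i, dist x y ≤ (1/2 : ℝ)^n := by
    intro n i x hx y hy
    have h1 : dist x (u i) < (1/2 : ℝ)^(n+1) := mem_ball.1 hx.1
    have h2 : dist y (u i) < (1/2 : ℝ)^(n+1) := mem_ball.1 hy.1
    have heq : (1/2 : ℝ)^(n+1) + (1/2 : ℝ)^(n+1) = (1/2 : ℝ)^n := by ring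
    calc dist x y ≤ dist x (u i) + dist y (u i) := dist_triangle_right _ _ _
      _ ≤ (1/2 : ℝ)^n := by rw [← heq]; linarith
  -- the Luzin scheme cells
  set C : List ℕ → Set X := fun l => ⋂ m ∈ Finset.range l.length, Q m (l.getD m 0) with hCdef
  have Cmem : ∀ (l : List ℕ) (x : X), x ∈ C l ↔ ∀ m < l.length, x ∈ Q m (l.getD m 0) := by
    intro l x
    simp only [hCdef, Set.mem_iInter, Finset.mem_range]
  have Cmeas : ∀ l, MeasurableSet (C l) :=
    fun l => Finset.measurableSet_biInter _ fun m _ => Qmeas m _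
  have Ctake : ∀ (l : List ℕ) (k : ℕ), C l ⊆ C (l.take k) := by
    intro l k x hx
    rw [Cmem] at hx ⊢
    intro m hm
    have hlen : m < l.length := by
      rw [List.length_take] at hm
      omega
    have hgd : (l.take k).getD m 0 = l.getD m 0 := by
      have hmk : m < k := by
        rw [List.length_take] at hm
        omega
      rw [List.getD_eq_getElem?_getD, List.getD_eq_getElem?_getD, List.getElem?_take,
        if_pos hmk]
    rw [hgd]
    exact hx m hlen
  have Cdisj : ∀ l l' : List ℕ, l.length = l'.length → l ≠ l' → Disjoint (C l) (C l') := by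
    intro l l' hlen hne
    have hex : ∃ m, m < l.length ∧ l.getD m 0 ≠ l'.getD m 0 := by
      by_contra hcon
      push_neg at hcon
      refine hne (List.ext_getElem hlen fun i h1 h2 => ?_)
      have := hcon i h1
      rwa [List.getD_eq_getElem l 0 h1, List.getD_eq_getElem l' 0 h2] at this
    obtain ⟨m, hm, hne'⟩ := hex
    refine Set.disjoint_left.2 fun x hx hx' => ?_
    have h1 := (Cmem l x).1 hx m hm
    have h2 := (Cmem l' x).1 hx' m (by omega)
    exact Set.disjoint_left.1 (Qdisj m _ _ hne') h1 h2
  have Ccover : ∀ (n : ℕ) (x : X), ∃ l : List ℕ, l.length = n ∧ x ∈ C l := by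
    intro n x
    choose idx hidx using fun m => Qcover m x
    refine ⟨List.ofFn (fun m : Fin n => idx m), by simp, ?_⟩
    rw [Cmem]
    intro m hm
    rw [List.length_ofFn] at hm
    have : (List.ofFn (fun m : Fin n => idx m)).getD m 0 = idx m := by
      rw [List.getD_eq_getElem _ 0 (by simpa using hm)]
      simp
    rw [this]
    exact hidx m
  have Cdiam : ∀ (l : List ℕ), 0 < l.length →
      ∀ x ∈ C l, ∀ y ∈ C l, dist x y ≤ (1/2 : ℝ)^(l.length - 1) := by
    intro l hl x hx y hy
    have hm : l.length - 1 < l.length := by omega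
    exact Qdiam _ _ _ ((Cmem l x).1 hx _ hm) _ ((Cmem l y).1 hy _ hm)
  -- analytic images
  have Aana : ∀ l : List ℕ, AnalyticSet (f '' C l) :=
    fun l => ((Cmeas l).analyticSet).image_of_continuous hf
  -- enumeration of lists
  let e : List ℕ ≃ ℕ := Denumerable.eqv (List ℕ)
  -- level-n families with point-finite Borel envelopes
  have hlevel : ∀ n : ℕ, ∃ Bf : ℕ → Set ℝ,
      (∀ l : List ℕ, l.length = n → f '' C l ⊆ Bf (e l)) ∧ (∀ j, MeasurableSet (Bf j)) ∧
      ∀ y : ℝ, {l : List ℕ | l.length = n ∧ y ∈ Bf (e l)}.Finite := by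
    intro n
    set sfam : ℕ → Set ℝ :=
      fun j => if (e.symm j).length = n then f '' C (e.symm j) else ∅ with hsfam
    have hana : ∀ j, AnalyticSet (sfam j) := by
      intro j
      simp only [hsfam]
      by_cases hc : (e.symm j).length = n
      · rw [if_pos hc]; exact Aana _
      · rw [if_neg hc]; exact analyticSet_empty
    have hmemsfam : ∀ (y : ℝ) (j : ℕ), y ∈ sfam j →
        (e.symm j).length = n ∧ ∃ x, x ∈ C (e.symm j) ∧ f x = y := by
      intro y j hj
      simp only [hsfam] at hj
      by_cases hc : (e.symm j).length = n
      · rw [if_pos hc] at hj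
        obtain ⟨x, hx1, hx2⟩ := hj
        exact ⟨hc, x, hx1, hx2⟩
      · rw [if_neg hc] at hj
        exact absurd hj (notMem_empty y)
    have hpointfin : ∀ y : ℝ, {j : ℕ | y ∈ sfam j}.Finite := by
      intro y
      set S := {j : ℕ | y ∈ sfam j} with hS
      have hwit : ∀ j : ℕ, ∃ x : X, j ∈ S → x ∈ C (e.symm j) ∧ f x = y := by
        intro j
        by_cases hj : j ∈ S
        · obtain ⟨-, x, hx⟩ := hmemsfam y j hj
          exact ⟨x, fun _ => hx⟩
        · exact ⟨hX.some, fun h => absurd h hj⟩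
      choose w hw using hwit
      have himg : w '' S ⊆ f ⁻¹' {y} := by
        rintro - ⟨j, hj, rfl⟩
        exact (hw j hj).2
      have hinj : Set.InjOn w S := by
        intro j hj j' hj' hww
        have h1 := hw j hj
        have h2 := hw j' hj'
        by_contra hne
        have hlne : e.symm j ≠ e.symm j' := fun hEq => hne (e.symm.injective hEq)
        have hd := Cdisj (e.symm j) (e.symm j')
          (by rw [(hmemsfam y j hj).1, (hmemsfam y j' hj').1]) hlne
        exact Set.disjoint_left.1 hd h1.1 (hww ▸ h2.1)
      exact Set.Finite.of_finite_image ((hfib y).subset himg) hinj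
    have hlim : (⋂ m, ⋃ j, sfam (j + m)) = ∅ := by
      rw [eq_empty_iff_forall_notMem]
      intro y hy
      obtain ⟨mb, hmb⟩ := (hpointfin y).bddAbove
      have h1 := mem_iInter.1 hy (mb + 1)
      obtain ⟨j, hj⟩ := mem_iUnion.1 h1
      have h2 : j + (mb + 1) ∈ {j : ℕ | y ∈ sfam j} := hj
      have := hmb h2
      omega
    obtain ⟨Bf, hBf1, hBf2, hBf3⟩ := NovikovAux.envelopes_limsup sfam hana hlim
    refine ⟨Bf, ?_, hBf2, ?_⟩
    · intro l hl
      have hsl : sfam (e l) = f '' C l := by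
        simp only [hsfam]
        simp only [Equiv.symm_apply_apply]
        rw [if_pos hl]
      rw [← hsl]
      exact hBf1 (e l)
    · intro y
      have hyn : y ∉ ⋂ m, ⋃ j, Bf (j + m) := by
        rw [hBf3]; exact notMem_empty y
      rw [mem_iInter] at hyn
      push_neg at hyn
      obtain ⟨m, hm⟩ := hyn
      rw [mem_iUnion] at hm
      push_neg at hm
      have hsub : (fun l : List ℕ => e l) '' {l : List ℕ | l.length = n ∧ y ∈ Bf (e l)}
          ⊆ Set.Iio m := by
        rintro - ⟨l, ⟨-, hyB⟩, rfl⟩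
        simp only [Set.mem_Iio]
        by_contra hge
        push_neg at hge
        have : e l = (e l - m) + m := by omega
        rw [this] at hyB
        exact hm _ hyB
      exact Set.Finite.of_finite_image ((Set.finite_Iio m).subset hsub)
        (e.injective.injOn)
    -- end hlevel
  choose Bf hBf1 hBf2 hBf3 using hlevel
  -- Borel sandwich between each analytic image and its closure
  have hsand : ∀ l : List ℕ, ∃ S, f '' C l ⊆ S ∧ MeasurableSet S ∧ S ⊆ closure (f '' C l) :=
    fun l => NovikovAux.analytic_sandwich (Aana l)
  choose Sand hS1 hS2 hS3 using hsand
  set Braw : List ℕ → Set ℝ := fun l => Sand l ∩ Bf l.length (e l) with hBrawdef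
  set B : List ℕ → Set ℝ := fun l => ⋂ m ∈ Finset.range (l.length + 1), Braw (l.take m)
    with hBdef
  have hBrawsub : ∀ l, f '' C l ⊆ Braw l :=
    fun l => subset_inter (hS1 l) (hBf1 l.length l rfl)
  have hBsub : ∀ l, f '' C l ⊆ B l := by
    intro l
    refine subset_iInter₂ fun m _ => ?_
    exact (Set.image_mono (f := f) (Ctake l m)).trans (hBrawsub _)
  have hBmeas : ∀ l, MeasurableSet (B l) := by
    intro l
    exact Finset.measurableSet_biInter _ fun m _ => (hS2 _).inter (hBf2 _ _)
  have hBraw_of_B : ∀ l, B l ⊆ Braw l := by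
    intro l
    have hmem : l.length ∈ Finset.range (l.length + 1) := Finset.mem_range.2 (by omega)
    intro y hy
    have := Set.mem_iInter₂.1 hy l.length hmem
    rwa [List.take_length] at this
  have hBcl : ∀ l, B l ⊆ closure (f '' C l) :=
    fun l => (hBraw_of_B l).trans ((Set.inter_subset_left).trans (hS3 l))
  have hBtake : ∀ (l : List ℕ) (k : ℕ), B l ⊆ B (l.take k) := by
    intro l k y hy
    refine Set.mem_iInter₂.2 fun m hm => ?_
    rw [List.take_take]
    have hmin : min m k ∈ Finset.range (l.length + 1) := by
      simp only [Finset.mem_range, List.length_take] at hm ⊢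
      omega
    exact Set.mem_iInter₂.1 hy (min m k) hmin
  have hBfin : ∀ (y : ℝ) (n : ℕ), {l : List ℕ | y ∈ B l ∧ l.length = n}.Finite := by
    intro y n
    refine (hBf3 n y).subset fun l hl => ?_
    refine ⟨hl.2, ?_⟩
    have := hBraw_of_B l hl.1
    simp only [hBrawdef] at this
    have h2 := this.2
    rwa [hl.2] at h2
  -- the Borel description of the range
  set G : ℕ → Set ℝ := fun n => ⋃ l : List ℕ, if l.length = n then B l else ∅ with hGdef
  have hGmeas : ∀ n, MeasurableSet (G n) := by
    intro n
    refine MeasurableSet.iUnion fun l => ?_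
    by_cases hc : l.length = n
    · rw [if_pos hc]; exact hBmeas l
    · rw [if_neg hc]; exact MeasurableSet.empty
  suffices hRange : range f = ⋂ n, G n by
    rw [hRange]
    exact MeasurableSet.iInter fun n => hGmeas n
  apply Subset.antisymm
  · rintro - ⟨x, rfl⟩
    refine mem_iInter.2 fun n => ?_
    obtain ⟨l, hlen, hxl⟩ := Ccover n x
    refine mem_iUnion.2 ⟨l, ?_⟩
    rw [if_pos hlen]
    exact hBsub l ⟨x, hxl, rfl⟩
  · intro y hy
    -- the tree of cells whose envelope contains y
    set T : Set (List ℕ) := {l : List ℕ | y ∈ B l} with hT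
    have hdc : ∀ l ∈ T, ∀ m, l.take m ∈ T := fun l hl m => hBtake l m hl
    have hfin : ∀ n : ℕ, {l | l ∈ T ∧ l.length = n}.Finite := fun n => hBfin y n
    have hne : ∀ n : ℕ, ∃ l ∈ T, l.length = n := by
      intro n
      have h1 := mem_iInter.1 hy n
      obtain ⟨l, hl⟩ := mem_iUnion.1 h1
      by_cases hc : l.length = n
      · rw [if_pos hc] at hl
        exact ⟨l, hl, hc⟩
      · rw [if_neg hc] at hl
        exact absurd hl (notMem_empty y)
    obtain ⟨L, hLT, hLlen, hLpre⟩ := KonigAux.exists_branch T hdc hfin hne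
    -- the cells along the branch are nested
    have hCL : ∀ n, C (L (n + 1)) ⊆ C (L n) := by
      intro n
      have h1 : L n = (L (n + 1)).take ((L n).length) := List.prefix_iff_eq_take.1 (hLpre n)
      rw [h1]
      exact Ctake _ _
    have hCLle : ∀ m n, m ≤ n → C (L n) ⊆ C (L m) := by
      intro m n hmn
      induction n with
      | zero =>
        have : m = 0 := by omega
        subst this; exact subset_rfl
      | succ k ih =>
        rcases Nat.lt_or_ge m (k+1) with h'|h'
        · exact (hCL k).trans (ih (by omega))
        · have : m = k + 1 := by omega
          subst this; exact subset_rfl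
    -- choose approximating points in the cells
    have hpick : ∀ n : ℕ, ∃ x : X, x ∈ C (L (n + 1)) ∧ dist y (f x) < (1/2 : ℝ)^n := by
      intro n
      have h1 : y ∈ closure (f '' C (L (n + 1))) := hBcl _ (hLT (n + 1))
      obtain ⟨b, hb, hbd⟩ := Metric.mem_closure_iff.1 h1 ((1/2 : ℝ)^n) (by positivity)
      obtain ⟨x, hx, rfl⟩ := hb
      exact ⟨x, hx, hbd⟩
    choose xs hxs1 hxs2 using hpick
    have hcauchy : CauchySeq xs := by
      refine cauchySeq_of_le_tendsto_0 (fun N => (1/2 : ℝ)^N) (fun n m N hn hm => ?_) ?_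
      · have h1 : xs n ∈ C (L (N + 1)) := hCLle (N+1) (n+1) (by omega) (hxs1 n)
        have h2 : xs m ∈ C (L (N + 1)) := hCLle (N+1) (m+1) (by omega) (hxs1 m)
        have h3 := Cdiam (L (N + 1)) (by rw [hLlen]; omega) _ h1 _ h2
        rwa [hLlen] at h3
      · exact tendsto_pow_atTop_nhds_zero_of_lt_one (by norm_num) (by norm_num)
    obtain ⟨z, hz⟩ := cauchySeq_tendsto_of_complete hcauchy
    have hfz : Filter.Tendsto (fun n => f (xs n)) Filter.atTop (nhds (f z)) :=
      ((hf.tendsto z).comp hz)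
    have hfy : Filter.Tendsto (fun n => f (xs n)) Filter.atTop (nhds y) := by
      rw [tendsto_iff_dist_tendsto_zero]
      refine squeeze_zero (g := fun n => (1/2 : ℝ)^n) (fun n => dist_nonneg) (fun n => ?_)
        (tendsto_pow_atTop_nhds_zero_of_lt_one (by norm_num) (by norm_num))
      rw [dist_comm]
      exact (hxs2 n).le
    have : y = f z := tendsto_nhds_unique hfy hfz
    rw [this]
    exact mem_range_self z

end FinFibAux

namespace CountAux

open MeasureTheory Set Function Topology

/-- Image of a closed set under a continuous finite-to-one map to `ℝ` is Borel. -/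
theorem aux_image {X : Type*} [TopologicalSpace X] [PolishSpace X]
    {f : X → ℝ} (hf : Continuous f) (hfib : ∀ y : ℝ, (f ⁻¹' {y}).Finite)
    {U : Set X} (hUc : IsClosed U) :
    MeasurableSet (f '' U) := by
  haveI : PolishSpace U := hUc.polishSpace
  have him : f '' U = range (f ∘ (Subtype.val : U → X)) := by
    rw [Set.range_comp, Subtype.range_coe]
  rw [him]
  refine FinFibAux.measurableSet_range_of_continuous_finite_fibers
    (hf.comp continuous_subtype_val) ?_
  intro y
  have hpre : (f ∘ (Subtype.val : U → X)) ⁻¹' {y}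
      = (Subtype.val : U → X) ⁻¹' (f ⁻¹' {y}) := rfl
  rw [hpre]
  exact Set.Finite.preimage Subtype.val_injective.injOn (hfib y)

/-- Images of countably many Borel sets under a finite-to-one Borel map to `ℝ` are Borel. -/
theorem measurableSet_image_seq {X : Type*} [MeasurableSpace X] [StandardBorelSpace X]
    {f : X → ℝ} (hf : Measurable f) (hfib : ∀ y : ℝ, (f ⁻¹' {y}).Finite)
    (U : ℕ → Set X) (hU : ∀ k, MeasurableSet (U k)) :
    ∀ k, MeasurableSet (f '' U k) := by
  letI := upgradeStandardBorel X
  obtain ⟨τ', hle, hcont, hpol⟩ := hf.exists_continuous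
  have hborel' : @borel X τ' = ‹MeasurableSpace X› := by
    rw [@borel_eq_borel_of_le X τ' _ hpol (by infer_instance) hle]
    exact (eq_borel_upgradeStandardBorel X).symm
  haveI hb' : @BorelSpace X τ' _ := @BorelSpace.mk X τ' _ hborel'.symm
  have hclop : ∀ k, ∃ T : TopologicalSpace X, T ≤ τ' ∧ @PolishSpace X T ∧
      IsClosed[T] (U k) ∧ IsOpen[T] (U k) := by
    intro k
    obtain ⟨T, hT1, hT2, hT3, hT4⟩ := @MeasurableSet.isClopenable X τ' hpol _ hb' _ (hU k)
    exact ⟨T, hT1, hT2, hT3, hT4⟩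
  choose T hTle hTpol hTcl hTop using hclop
  obtain ⟨τ'', hτ''T, hτ''le, hτ''pol⟩ :=
    @PolishSpace.exists_polishSpace_forall_le X ℕ _ τ' hpol T hTle hTpol
  intro k
  have h1 : IsOpen[T k] (U k)ᶜ := (@isOpen_compl_iff X (U k) (T k)).2 (hTcl k)
  have h2 : IsOpen[τ''] (U k)ᶜ := IsOpen.mono h1 (hτ''T k)
  have hUcl : IsClosed[τ''] (U k) := (@isOpen_compl_iff X (U k) τ'').1 h2
  exact @aux_image X τ'' hτ''pol f (continuous_le_dom hτ''le hcont) hfib (U k) hUcl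

/-- The sets where the fibres of a finite-to-one Borel map have at least `n` points are Borel. -/
theorem measurable_count {X : Type*} [MeasurableSpace X] [StandardBorelSpace X]
    {f : X → ℝ} (hf : Measurable f) (hfib : ∀ y : ℝ, (f ⁻¹' {y}).Finite) (n : ℕ) :
    MeasurableSet {y : ℝ | n ≤ (f ⁻¹' {y}).ncard} := by
  classical
  obtain ⟨e₁, he₁⟩ := exists_measurableEmbedding_real X
  -- measurability of the relevant images
  set img : ℚ × ℚ → Set ℝ := fun p => f '' (e₁ ⁻¹' Ioo (p.1 : ℝ) (p.2 : ℝ)) with himgdef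
  have himg_meas : ∀ p : ℚ × ℚ, MeasurableSet (img p) := by
    set enc : ℚ × ℚ ≃ ℕ := Denumerable.eqv (ℚ × ℚ)
    intro p
    have := measurableSet_image_seq hf hfib
      (fun k => e₁ ⁻¹' Ioo ((enc.symm k).1 : ℝ) ((enc.symm k).2 : ℝ))
      (fun k => he₁.measurable measurableSet_Ioo) (enc p)
    simpa only [Equiv.symm_apply_apply] using this
  have hmain : {y : ℝ | n ≤ (f ⁻¹' {y}).ncard} =
      ⋃ (S : Finset (ℚ × ℚ)), ⋃ (_ : S.card = n ∧ (S : Set (ℚ × ℚ)).Pairwise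
        fun p p' => Disjoint (Ioo (p.1 : ℝ) (p.2 : ℝ)) (Ioo (p'.1 : ℝ) (p'.2 : ℝ))),
      ⋂ p ∈ S, img p := by
    apply Subset.antisymm
    · intro y hy
      simp only [mem_setOf_eq] at hy
      -- pick `n` points in the fibre
      have hcard : n ≤ ((hfib y).toFinset).card := by
        rwa [← Set.ncard_eq_toFinset_card (f ⁻¹' {y}) (hfib y)]
      obtain ⟨F, hFsub, hFcard⟩ := Finset.exists_subset_card_eq hcard
      set F' : Finset ℝ := F.image e₁ with hF'
      have hF'card : F'.card = n := by
        rw [hF', Finset.card_image_of_injOn (he₁.injective.injOn), hFcard]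
      -- a positive separation between distinct points
      set D := F'.offDiag.image (fun p => |p.1 - p.2|) with hD
      set δ : ℝ := if hDne : D.Nonempty then D.min' hDne else 1 with hδ
      have hδpos : 0 < δ := by
        rw [hδ]
        split
        · rename_i hDne
          refine (Finset.lt_min'_iff D hDne).2 fun b hb => ?_
          rw [hD] at hb
          simp only [Finset.mem_image] at hb
          obtain ⟨⟨a1, a2⟩, hab, habs⟩ := hb
          rw [Finset.mem_offDiag] at hab
          have hne : a1 ≠ a2 := hab.2.2
          rw [← habs]
          exact abs_pos.2 (sub_ne_zero.2 hne)
        · norm_num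
      have hδle : ∀ r ∈ F', ∀ r' ∈ F', r ≠ r' → δ ≤ |r - r'| := by
        intro r hr r' hr' hne
        have hmem : |r - r'| ∈ D := by
          rw [hD]
          exact Finset.mem_image.2 ⟨(r, r'), Finset.mem_offDiag.2 ⟨hr, hr', hne⟩, rfl⟩
        have hDne : D.Nonempty := ⟨_, hmem⟩
        rw [hδ, dif_pos hDne]
        exact D.min'_le _ hmem
      -- rational intervals around each point
      have hpq : ∀ r : ℝ, ∃ pq : ℚ × ℚ, r ∈ Ioo (pq.1 : ℝ) (pq.2 : ℝ) ∧
          Ioo (pq.1 : ℝ) (pq.2 : ℝ) ⊆ Ioo (r - δ/3) (r + δ/3) := by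
        intro r
        obtain ⟨p, hp1, hp2⟩ := exists_rat_btwn (show r - δ/3 < r by linarith)
        obtain ⟨q, hq1, hq2⟩ := exists_rat_btwn (show r < r + δ/3 by linarith)
        refine ⟨(p, q), ⟨hp2, hq1⟩, fun z hz => ⟨?_, ?_⟩⟩
        · exact lt_trans hp1 hz.1
        · exact lt_trans hz.2 hq2
      choose pq hpq1 hpq2 using hpq
      have hclose : ∀ r : ℝ, ∀ z ∈ Ioo ((pq r).1 : ℝ) ((pq r).2 : ℝ), |z - r| < δ/3 := by
        intro r z hz
        have := hpq2 r hz
        rw [mem_Ioo] at this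
        rw [abs_lt]
        constructor <;> linarith [this.1, this.2]
      set S : Finset (ℚ × ℚ) := F'.image pq with hS
      have hinj : Set.InjOn pq F' := by
        intro r hr r' hr' hrr
        by_contra hne
        have h1 : |r' - r| < δ/3 := by
          apply hclose r
          rw [hrr]
          exact hpq1 r'
        have h2 := hδle r (by exact_mod_cast hr) r' (by exact_mod_cast hr') hne
        rw [abs_sub_comm] at h2
        linarith [h1, h2, hδpos]
      refine mem_iUnion.2 ⟨S, mem_iUnion.2 ⟨⟨?_, ?_⟩, ?_⟩⟩
      · rw [hS, Finset.card_image_of_injOn hinj, hF'card]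
      · -- pairwise disjoint
        intro p hp p' hp' hne
        rw [hS] at hp hp'
        simp only [Finset.coe_image, Set.mem_image] at hp hp'
        obtain ⟨r, hr, rfl⟩ := hp
        obtain ⟨r', hr', rfl⟩ := hp'
        have hrr : r ≠ r' := fun h => hne (by rw [h])
        refine Set.disjoint_left.2 fun z hz hz' => ?_
        have h1 := hclose r z hz
        have h2 := hclose r' z hz'
        have h3 := hδle r (by exact_mod_cast hr) r' (by exact_mod_cast hr') hrr
        have habs : |r - r'| ≤ |z - r| + |z - r'| := by
          have hrr' : r - r' = -(z - r) + (z - r') := by ring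
          rw [hrr']
          refine (abs_add_le _ _).trans (le_of_eq ?_)
          rw [abs_neg]
        linarith
      · -- y belongs to all the images
        refine Set.mem_iInter₂.2 fun p hp => ?_
        rw [hS] at hp
        simp only [Finset.mem_image] at hp
        obtain ⟨r, hr, rfl⟩ := hp
        rw [hF'] at hr
        simp only [Finset.mem_image] at hr
        obtain ⟨x, hx, rfl⟩ := hr
        have hxfib : x ∈ f ⁻¹' {y} := by
          have := hFsub hx
          rwa [Set.Finite.mem_toFinset] at this
        exact ⟨x, by simpa using hpq1 (e₁ x), hxfib⟩
    · intro y hy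
      obtain ⟨S, hS⟩ := mem_iUnion.1 hy
      obtain ⟨⟨hcard, hdisj⟩, hyS⟩ := mem_iUnion.1 hS
      simp only [mem_setOf_eq]
      -- choose a fibre point in each interval
      have hwit : ∀ p : {p : ℚ × ℚ // p ∈ S}, ∃ x : X,
          x ∈ e₁ ⁻¹' Ioo ((p : ℚ × ℚ).1 : ℝ) ((p : ℚ × ℚ).2 : ℝ) ∧ f x = y := by
        rintro ⟨p, hp⟩
        obtain ⟨x, hx1, hx2⟩ := Set.mem_iInter₂.1 hyS p hp
        exact ⟨x, hx1, hx2⟩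
      choose w hw1 hw2 using hwit
      have hwinj : Function.Injective w := by
        rintro ⟨p, hp⟩ ⟨p', hp'⟩ hww
        by_contra hne
        have hne' : p ≠ p' := fun h => hne (Subtype.ext h)
        have hd := hdisj hp hp' hne'
        have h1 := hw1 ⟨p, hp⟩
        have h2 := hw1 ⟨p', hp'⟩
        rw [hww] at h1
        exact Set.disjoint_left.1 hd h1 h2
      set W : Finset X := S.attach.image w with hW
      have hWcard : W.card = n := by
        rw [hW, Finset.card_image_of_injective _ hwinj, Finset.card_attach, hcard]
      have hWsub : (W : Set X) ⊆ f ⁻¹' {y} := by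
        intro x hx
        rw [hW] at hx
        simp only [Finset.coe_image, Set.mem_image] at hx
        obtain ⟨p, -, rfl⟩ := hx
        exact hw2 p
      calc n = (W : Set X).ncard := by rw [Set.ncard_coe_finset, hWcard]
        _ ≤ (f ⁻¹' {y}).ncard := Set.ncard_le_ncard hWsub (hfib y)
  rw [hmain]
  refine MeasurableSet.iUnion fun S => ?_
  refine MeasurableSet.iUnion fun _ => ?_
  exact Finset.measurableSet_biInter _ fun p _ => himg_meas p

end CountAux

open MeasureTheory

/-- Let `Z₁, Z₂` be standard Borel spaces with measurable flows `g¹, g²`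
(each `g¹_s` a Borel bijection), and `π : Z₁ → Z₂` Borel measurable with finite fibres,
intertwining the flows. If `P₂` is an invariant ergodic Borel probability measure for
`g²`, then the cardinality of the fibre `π⁻¹{z₂}` is `P₂`-a.e. constant. -/
theorem fibre_cardinality_ae_constant
    {Z₁ Z₂ : Type*} [MeasurableSpace Z₁] [StandardBorelSpace Z₁]
    [MeasurableSpace Z₂] [StandardBorelSpace Z₂]
    (g₁ : ℝ → Z₁ → Z₁) (g₂ : ℝ → Z₂ → Z₂)
    (hg₁m : ∀ s, Measurable (g₁ s)) (hg₁bij : ∀ s, Function.Bijective (g₁ s))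
    (hg₁0 : g₁ 0 = id) (hg₁add : ∀ s t, g₁ (s + t) = g₁ s ∘ g₁ t)
    (hg₂m : ∀ s, Measurable (g₂ s))
    (hg₂0 : g₂ 0 = id) (hg₂add : ∀ s t, g₂ (s + t) = g₂ s ∘ g₂ t)
    (π : Z₁ → Z₂) (hπ : Measurable π)
    (hfib : ∀ z₂ : Z₂, (π ⁻¹' {z₂}).Finite)
    (hcomm : ∀ s, π ∘ g₁ s = g₂ s ∘ π)
    (P₂ : Measure Z₂) [IsProbabilityMeasure P₂]
    (hinv₂ : ∀ s, MeasurePreserving (g₂ s) P₂ P₂)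
    (herg₂ : ∀ A : Set Z₂, MeasurableSet A → (∀ s, g₂ s ⁻¹' A = A) → P₂ A = 0 ∨ P₂ A = 1) :
    ∃ c : ℕ, ∀ᵐ z₂ ∂P₂, (π ⁻¹' {z₂}).ncard = c := by
  classical
  obtain ⟨e₂, he₂⟩ := MeasureTheory.exists_measurableEmbedding_real Z₂
  set f : Z₁ → ℝ := e₂ ∘ π with hfdef
  have hfmeas : Measurable f := he₂.measurable.comp hπ
  have hfibeq : ∀ z : Z₂, f ⁻¹' {e₂ z} = π ⁻¹' {z} := by
    intro z
    ext x
    simp only [hfdef, Set.mem_preimage, Function.comp_apply, Set.mem_singleton_iff]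
    exact ⟨fun h => he₂.injective h, fun h => by rw [h]⟩
  have hfib' : ∀ y : ℝ, (f ⁻¹' {y}).Finite := by
    intro y
    by_cases hy : ∃ z, e₂ z = y
    · obtain ⟨z, rfl⟩ := hy
      rw [hfibeq z]
      exact hfib z
    · have hemp : f ⁻¹' {y} = ∅ := by
        rw [Set.eq_empty_iff_forall_notMem]
        intro x hx
        exact hy ⟨π x, hx⟩
      rw [hemp]
      exact Set.finite_empty
  -- the level sets of the fibre-cardinality function are Borel
  have hcnt : ∀ n : ℕ, MeasurableSet {z : Z₂ | (π ⁻¹' {z}).ncard = n} := by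
    intro n
    have h1 := CountAux.measurable_count hfmeas hfib' n
    have h2 := CountAux.measurable_count hfmeas hfib' (n + 1)
    have heq : {z : Z₂ | (π ⁻¹' {z}).ncard = n} =
        e₂ ⁻¹' ({y : ℝ | n ≤ (f ⁻¹' {y}).ncard} \ {y : ℝ | n + 1 ≤ (f ⁻¹' {y}).ncard}) := by
      ext z
      simp only [Set.mem_setOf_eq, Set.mem_preimage, Set.mem_diff, hfibeq z, not_le]
      omega
    rw [heq]
    exact he₂.measurable (h1.diff h2)
  -- the time-`s` maps of the flow `g₂` are injective
  have hg₂inj : ∀ s : ℝ, Function.Injective (g₂ s) := by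
    intro s
    have hli : Function.LeftInverse (g₂ (-s)) (g₂ s) := by
      intro z
      have h1 : (g₂ (-s) ∘ g₂ s) z = g₂ (-s + s) z := (congrFun (hg₂add (-s) s) z).symm
      rw [neg_add_cancel, hg₂0] at h1
      exact h1
    exact hli.injective
  -- the flow `g₁` maps fibres bijectively onto fibres
  have hkey : ∀ (s : ℝ) (z : Z₂), π ⁻¹' {g₂ s z} = g₁ s '' (π ⁻¹' {z}) := by
    intro s z
    apply Set.Subset.antisymm
    · intro x' hx'
      obtain ⟨x, rfl⟩ := (hg₁bij s).2 x'
      have h1 : π (g₁ s x) = g₂ s (π x) := congrFun (hcomm s) x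
      have h2 : π (g₁ s x) = g₂ s z := hx'
      have h3 : π x = z := hg₂inj s (by rw [← h1, h2])
      exact ⟨x, h3, rfl⟩
    · rintro - ⟨x, hx, rfl⟩
      have h1 : π (g₁ s x) = g₂ s (π x) := congrFun (hcomm s) x
      simp only [Set.mem_preimage, Set.mem_singleton_iff] at hx ⊢
      rw [h1, hx]
  -- so the level sets are exactly invariant
  have hinvset : ∀ (n : ℕ) (s : ℝ),
      g₂ s ⁻¹' {z : Z₂ | (π ⁻¹' {z}).ncard = n} = {z : Z₂ | (π ⁻¹' {z}).ncard = n} := by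
    intro n s
    ext z
    simp only [Set.mem_preimage, Set.mem_setOf_eq]
    rw [hkey s z, Set.ncard_image_of_injective _ (hg₁bij s).1]
  -- ergodicity gives measure `0` or `1` for each level set
  by_contra hcon
  push_neg at hcon
  have hzero : ∀ n : ℕ, P₂ {z : Z₂ | (π ⁻¹' {z}).ncard = n} = 0 := by
    intro n
    rcases herg₂ _ (hcnt n) (hinvset n) with h|h
    · exact h
    · exfalso
      refine hcon n ?_
      rw [MeasureTheory.ae_iff]
      simp only [ne_eq, not_not]
      have hcompl : {z : Z₂ | ¬ (π ⁻¹' {z}).ncard = n} = {z : Z₂ | (π ⁻¹' {z}).ncard = n}ᶜ :=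
        rfl
      rw [hcompl, measure_compl (hcnt n) (measure_ne_top P₂ _), h, measure_univ]
      simp
  have hcover : (⋃ n : ℕ, {z : Z₂ | (π ⁻¹' {z}).ncard = n}) = Set.univ := by
    rw [Set.eq_univ_iff_forall]
    intro z
    exact Set.mem_iUnion.2 ⟨(π ⁻¹' {z}).ncard, rfl⟩
  have hzero' := measure_iUnion_null hzero
  rw [hcover, measure_univ] at hzero'
  exact one_ne_zero hzero'
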